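/- arXiv:2106.07695 — 2 statements merged into one kernel-verified Lean document; each statement's English description precedes it below -/
import Mathlib

section
/- Let a, b be real numbers with |a| > |b|, b ≠ 0, and define f(x) = a·x/(x − b). Then the sequence defined by x₀ = a and x_{t+1} = f(x_t) converges to a + b. -/
/-- if `|a| > |b|` and `b ≠ 0`, the iteration `x₀ = a`,
`x_{t+1} = a·x_t/(x_t − b)` converges to `a + b`. -/
theorem stmt_1 (a b : ℝ) (hab : |a| > |b|) (hb : b ≠ 0)
    (x : ℕ → ℝ) (hx0 : x 0 = a)
    (hxs : ∀ t, x (t + 1) = a * x t / (x t - b)) :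
    Filter.Tendsto x Filter.atTop (nhds (a + b)) := by
  have ha : a ≠ 0 := by
    intro h; rw [h, abs_zero] at hab; exact absurd hab (not_lt.2 (abs_nonneg b))
  have hab0 : a + b ≠ 0 := by
    intro h
    have : a = -b := by linarith
    rw [this, abs_neg] at hab; exact lt_irrefl _ hab
  set q : ℝ := -b / a with hq
  have hqabs : |q| < 1 := by
    rw [hq, abs_div, abs_neg, div_lt_one (abs_pos.2 ha |>.trans_le le_rfl)]
    exact hab
  have hpow : ∀ n : ℕ, 1 ≤ n → |q ^ n| < 1 := by
    intro n hn
    rw [abs_pow]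
    calc |q| ^ n ≤ |q| ^ 1 := pow_le_pow_of_le_one (abs_nonneg q) hqabs.le hn
    _ = |q| := pow_one _
    _ < 1 := hqabs
  have hden : ∀ n : ℕ, 1 ≤ n → 1 - q ^ n ≠ 0 := by
    intro n hn h
    have h1 : q ^ n = 1 := by linarith
    have h2 := hpow n hn
    rw [h1, abs_one] at h2; exact lt_irrefl _ h2
  have hba : b = -(q * a) := by rw [hq]; field_simp
  have key : ∀ t, x t = (a + b) / (1 - q ^ (t + 1)) := by
    intro t
    induction t with
    | zero =>
      have hd := hden 1 le_rfl
      rw [hx0, eq_div_iff hd, pow_one, hba]; ring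
    | succ t ih =>
      have hd1 : 1 - q ^ (t + 1) ≠ 0 := hden _ (Nat.le_add_left 1 t)
      have hd2 : 1 - q ^ (t + 1 + 1) ≠ 0 := hden _ (Nat.le_add_left 1 (t + 1))
      rw [hxs t, ih]
      rw [hba]
      rw [div_eq_div_iff _ hd2]
      · field_simp
        ring
      · rw [div_sub' hd1, div_ne_zero_iff]
        refine ⟨?_, hd1⟩
        intro h
        apply mul_ne_zero ha hd2
        rw [← h]; ring
  have hq0 : Filter.Tendsto (fun t : ℕ => q ^ (t + 1)) Filter.atTop (nhds 0) := by
    have := tendsto_pow_atTop_nhds_zero_of_abs_lt_one hqabs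
    exact this.comp (Filter.tendsto_add_atTop_nat 1)
  have : Filter.Tendsto (fun t : ℕ => (a + b) / (1 - q ^ (t + 1))) Filter.atTop
      (nhds ((a + b) / (1 - 0))) :=
    Filter.Tendsto.div tendsto_const_nhds (tendsto_const_nhds.sub hq0) (by norm_num)
  simp only [sub_zero, div_one] at this
  exact this.congr (fun t => (key t).symm)
end

section
/- Let a, b be real numbers with a > b > 0, and define g(x) = a²x/(x(a−b) + b²) (the two-step map g = f ∘ f for f(x) = ax/(x−b)). Then for every x in the interval [a, a + 2b], |g(x) − (a+b)| ≤ (b/a)·|x − (a+b)|. -/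
/-- contraction estimate for the two-step map
`g x = a²x/(x(a−b)+b²)` on `[a, a+2b]`, with factor `b/a`. -/
theorem stmt_2 (a b : ℝ) (hab : a > b) (hb : b > 0) :
    ∀ x ∈ Set.Icc a (a + 2 * b),
      |a ^ 2 * x / (x * (a - b) + b ^ 2) - (a + b)| ≤ (b / a) * |x - (a + b)| := by
  intro x hx
  obtain ⟨hx1, hx2⟩ := hx
  have ha : (0:ℝ) < a := lt_trans hb hab
  have hD : x * (a - b) + b ^ 2 ≥ a * b := by nlinarith
  have hDpos : 0 < x * (a - b) + b ^ 2 := by nlinarith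
  have key : a ^ 2 * x / (x * (a - b) + b ^ 2) - (a + b)
      = b ^ 2 * (x - (a + b)) / (x * (a - b) + b ^ 2) := by
    field_simp
    ring
  rw [key, abs_div, abs_mul, abs_of_pos hDpos, abs_of_pos (by positivity : (0:ℝ) < b ^ 2)]
  rw [div_le_iff₀ hDpos]
  have h1 : b / a * (a * b) = b ^ 2 := by field_simp
  have h2 : b / a * (a * b) ≤ b / a * (x * (a - b) + b ^ 2) := by
    apply mul_le_mul_of_nonneg_left hD (by positivity)
  nlinarith [abs_nonneg (x - (a + b)), mul_le_mul_of_nonneg_right (h1 ▸ h2) (abs_nonneg (x - (a + b)))]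
end
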